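/- Let 0 < m₂ ≤ a ≤ m₁ < M₁ ≤ b ≤ M₂, v ≥ 1 and p > 1. Then a^p ♯_v b^p ≤ C_p · (a ♯_v b)^p, where x ♯_v y = x^{1-v}·y^v and C_p = (m₂^p ♯_v M₂^p)/((1-v)·m₂^p + v·M₂^p). -/
import Mathlib


theorem scalar_ando_hiai_extended (m₁ m₂ M₁ M₂ a b v p : ℝ)
    (hm₂ : 0 < m₂) (h1 : m₂ ≤ a) (h2 : a ≤ m₁) (h3 : m₁ < M₁) (h4 : M₁ ≤ b) (h5 : b ≤ M₂)
    (hv : 1 ≤ v) (hp : 1 < p) :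
    (a ^ p) ^ (1 - v) * (b ^ p) ^ v
      ≤ ((m₂ ^ p) ^ (1 - v) * (M₂ ^ p) ^ v / ((1 - v) * m₂ ^ p + v * M₂ ^ p))
        * (a ^ (1 - v) * b ^ v) ^ p := by
  have ha : 0 < a := lt_of_lt_of_le hm₂ h1
  have hb : 0 < b := lt_of_lt_of_le (hm₂.trans_le (h1.trans (h2.trans h3.le))) h4
  have hM : 0 < M₂ := lt_of_lt_of_le (hm₂.trans_le (h1.trans (h2.trans h3.le))) (h4.trans h5)
  set x := m₂ ^ p with hxdef
  set y := M₂ ^ p with hydef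
  have hx : 0 < x := Real.rpow_pos_of_pos hm₂ p
  have hy : 0 < y := Real.rpow_pos_of_pos hM p
  have hxy : x ≤ y :=
    Real.rpow_le_rpow hm₂.le (by linarith) (by linarith)
  -- LHS equals (a^(1-v) * b^v)^p
  have hL : (a ^ p) ^ (1 - v) * (b ^ p) ^ v = (a ^ (1 - v) * b ^ v) ^ p := by
    rw [Real.mul_rpow (Real.rpow_nonneg ha.le _) (Real.rpow_nonneg hb.le _),
      ← Real.rpow_mul ha.le, ← Real.rpow_mul hb.le,
      ← Real.rpow_mul ha.le, ← Real.rpow_mul hb.le, mul_comm (1 - v) p, mul_comm v p]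
  -- denominator positive
  have hden : 0 < (1 - v) * x + v * y := by nlinarith
  -- Bernoulli: arithmetic combination ≤ "geometric" with weights outside [0,1]
  have hber : (1 - v) * x + v * y ≤ x ^ (1 - v) * y ^ v := by
    have hs : -1 ≤ y / x - 1 := by
      have : 0 < y / x := div_pos hy hx
      linarith
    have hb1 : 1 + v * (y / x - 1) ≤ (1 + (y / x - 1)) ^ v :=
      one_add_mul_self_le_rpow_one_add hs hv
    have h2' : (1 + (y / x - 1)) ^ v = y ^ v / x ^ v := by
      rw [show 1 + (y / x - 1) = y / x by ring, Real.div_rpow hy.le hx.le]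
    have hxv : 0 < x ^ v := Real.rpow_pos_of_pos hx v
    have key : x * (1 + v * (y / x - 1)) ≤ x * (y ^ v / x ^ v) := by
      rw [← h2']
      exact mul_le_mul_of_nonneg_left hb1 hx.le
    have hleft : x * (1 + v * (y / x - 1)) = (1 - v) * x + v * y := by
      field_simp
      ring
    have hright : x * (y ^ v / x ^ v) = x ^ (1 - v) * y ^ v := by
      rw [show (1 : ℝ) - v = 1 + (-v) by ring, Real.rpow_add hx, Real.rpow_one,
        Real.rpow_neg hx.le]
      field_simp
    linarith [hleft ▸ hright ▸ key]
  have hC : 1 ≤ x ^ (1 - v) * y ^ v / ((1 - v) * x + v * y) :=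
    (one_le_div hden).mpr hber
  rw [hL]
  exact le_mul_of_one_le_left (Real.rpow_nonneg (by positivity) p) hC
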